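/- Let G be an abelian lattice-ordered group equipped with an operation V(g, f) = ⋁^g_{n≥1} fₙ satisfying axioms (A1) ⋁^g fₙ = ⋁^g (fₙ ∧ g), (A2) ⋁^g_{n≥1} fₙ = (f₁ ∧ g) ∨ ⋁^g_{n≥2} fₙ, and (A3) ⋁^g_{n≥1}(fₙ ∧ h) ≤ h for all h. Then G is Dedekind σ-complete: every sequence in G bounded above by some g has a least upper bound, namely ⋁^g_{n≥1} fₙ. -/
import Mathlib


theorem stmt19 {G : Type*} [Lattice G] [AddCommGroup G]
    [CovariantClass G G (· + ·) (· ≤ ·)]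
    (V : G → (ℕ → G) → G)
    (A1 : ∀ g : G, ∀ f : ℕ → G, V g f = V g (fun n => f n ⊓ g))
    (A2 : ∀ g : G, ∀ f : ℕ → G, V g f = (f 0 ⊓ g) ⊔ V g (fun n => f (n + 1)))
    (A3 : ∀ g h : G, ∀ f : ℕ → G, V g (fun n => f n ⊓ h) ≤ h)
    (f : ℕ → G) (g : G) (hg : ∀ n, f n ≤ g) :
    IsLUB (Set.range f) (V g f) := by
  constructor
  · rintro x ⟨n, rfl⟩
    induction n generalizing f with
    | zero =>
      rw [A2]
      exact le_sup_of_le_left (le_inf le_rfl (hg 0))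
    | succ n ih =>
      rw [A2]
      exact le_sup_of_le_right (ih (fun k => f (k + 1)) (fun k => hg (k + 1)))
  · intro h hh
    have hf : (fun n => f n ⊓ h) = f := funext fun n => inf_eq_left.2 (hh ⟨n, rfl⟩)
    calc V g f = V g (fun n => f n ⊓ h) := by rw [hf]
    _ ≤ h := A3 g h f
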